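/- For 0 < q < 1, n ∈ ℕ, and nonzero complex c, d, x, the terminating series satisfies the c↔d symmetry: ₂φ₀(q^(-n), cx; —; q, d q^n / c) = (d/c)^n · ₂φ₀(q^(-n), dx; —; q, c q^n / d). -/

import Mathlib

open scoped BigOperators

/-- q-Pochhammer infinite product `(a;q)_∞`. -/
noncomputable def qp (q a : ℂ) : ℂ := ∏' n : ℕ, (1 - a * q ^ n)

/-- q-Pochhammer `(a;q)_k`. -/
noncomputable def qpn (q a : ℂ) (k : ℕ) : ℂ := ∏ j ∈ Finset.range k, (1 - a * q ^ j)

/-- theta function `θ(x;q) = (x;q)_∞ (q/x;q)_∞`. -/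
noncomputable def theta (q x : ℂ) : ℂ := qp q x * qp q (q / x)

/-- the `₁φ₁(a;b;q,z)` series. -/
noncomputable def phi11 (q a b z : ℂ) : ℂ :=
  ∑' n : ℕ, qpn q a n / (qpn q q n * qpn q b n) * (-1) ^ n * q ^ (n * (n - 1) / 2) * z ^ n

/-- the terminating `₂φ₀(q^(-n),B;—;q,z)` series (Gasper–Rahman convention). -/
noncomputable def phi20 (q : ℂ) (n : ℕ) (B z : ℂ) : ℂ :=
  ∑ k ∈ Finset.range (n + 1),
    qpn q ((q ^ n)⁻¹) k * qpn q B k / qpn q q k * (-1) ^ k * (q ^ (k * (k - 1) / 2))⁻¹ * z ^ k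

open Finset
/-- Gaussian binomial coefficient as a complex number. -/
noncomputable def G (q : ℂ) : ℕ → ℕ → ℂ
  | _, 0 => 1
  | 0, _+1 => 0
  | m+1, j+1 => G q m (j+1) + q ^ (m - j) * G q m j

lemma G_zero (q : ℂ) (m : ℕ) : G q m 0 = 1 := by cases m <;> rfl

lemma G_eq_zero (q : ℂ) : ∀ {m j : ℕ}, m < j → G q m j = 0 := by
  intro m
  induction m with
  | zero => intro j hj; match j, hj with | j+1, _ => rfl
  | succ m ih =>
    intro j hj
    match j, hj with
    | j+1, hj =>
      show G q m (j+1) + q ^ (m - j) * G q m j = 0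
      rw [ih (by omega), ih (by omega)]; ring

lemma qpn_succ (q a : ℂ) (k : ℕ) : qpn q a (k+1) = qpn q a k * (1 - a * q ^ k) :=
  Finset.prod_range_succ _ _

lemma qpn_zero (q a : ℂ) : qpn q a 0 = 1 := rfl

lemma tri (j : ℕ) : (j+1) * j / 2 = j * (j-1) / 2 + j := by
  induction j with
  | zero => rfl
  | succ j _ =>
    have h1 : (j+2) * (j+1) = (j+1) * j + 2 * (j+1) := by ring
    have h2 : (j+1+1) * (j+1) / 2 = (j+1) * j / 2 + (j+1) := by
      rw [h1, Nat.add_mul_div_left _ _ (by norm_num)]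
    simpa using h2

lemma G_mul (q : ℂ) : ∀ n k : ℕ, k ≤ n →
    G q n k * qpn q q k * qpn q q (n - k) = qpn q q n := by
  intro n
  induction n with
  | zero => intro k hk; interval_cases k; simp [G_zero, qpn_zero]
  | succ n ih =>
    intro k hk
    match k with
    | 0 => simp [G_zero, qpn_zero]
    | j+1 =>
      have hj : j ≤ n := by omega
      show (G q n (j+1) + q ^ (n - j) * G q n j) * qpn q q (j+1) * qpn q q (n+1-(j+1)) = _
      have hnj : n + 1 - (j+1) = n - j := by omega
      rw [hnj]
      rcases Nat.lt_or_ge j n with hlt | hge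
      · -- j+1 ≤ n
        have h1 := ih (j+1) (by omega)
        have h2 := ih j hj
        have e1 : qpn q q (n - j) = qpn q q (n - (j+1)) * (1 - q * q ^ (n - (j+1))) := by
          conv_lhs => rw [show n - j = n - (j+1) + 1 from by omega, qpn_succ]
        have e2 : qpn q q (j+1) = qpn q q j * (1 - q * q ^ j) := qpn_succ _ _ _
        have e3 : qpn q q (n+1) = qpn q q n * (1 - q * q ^ n) := qpn_succ _ _ _
        have e4 : q * q ^ (n - (j+1)) = q ^ (n - j) := by
          rw [show n - j = n - (j+1) + 1 from by omega, pow_succ']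
        have e5 : q ^ (n - j) * q * q ^ j = q * q ^ n := by
          rw [mul_assoc, show q * q ^ j = q ^ (j+1) from (pow_succ' q j).symm, ← pow_add,
            show n - j + (j+1) = n + 1 from by omega, pow_succ']
        linear_combination (G q n (j+1) * qpn q q (j+1)) * e1
          + (1 - q * q ^ (n - (j+1))) * h1 - qpn q q n * e4
          + (q ^ (n-j) * G q n j * qpn q q (n-j)) * e2
          + (q ^ (n-j) * (1 - q * q ^ j)) * h2 - qpn q q n * e5 - e3
      · -- j = n
        have hjn : j = n := by omega
        subst hjn
        have h2 := ih j le_rfl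
        rw [Nat.sub_self] at h2
        rw [Nat.sub_self, G_eq_zero q (Nat.lt_succ_self j), qpn_succ q q j]
        simp only [qpn_zero, mul_one] at h2 ⊢
        linear_combination (1 - q * q ^ j) * h2

/-- Finite q-binomial theorem. -/
lemma qbinom (q a : ℂ) : ∀ m : ℕ,
    qpn q a m = ∑ j ∈ range (m+1), G q m j * (-a) ^ j * q ^ (j * (j-1) / 2) := by
  intro m
  induction m with
  | zero => simp [qpn_zero, G_zero]
  | succ m ih =>
    have key : ∀ j ∈ range (m+1),
        G q (m+1) (j+1) * (-a) ^ (j+1) * q ^ ((j+1) * ((j+1)-1) / 2)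
        = G q m (j+1) * (-a) ^ (j+1) * q ^ ((j+1) * ((j+1)-1) / 2)
          + -(a * q ^ m) * (G q m j * (-a) ^ j * q ^ (j * (j-1) / 2)) := by
      intro j hj
      have hj' : j ≤ m := Nat.lt_succ_iff.mp (Finset.mem_range.mp hj)
      have hpow : q ^ (m-j) * q ^ j = q ^ m := by rw [← pow_add, Nat.sub_add_cancel hj']
      show (G q m (j+1) + q ^ (m - j) * G q m j) * (-a) ^ (j+1) * q ^ ((j+1) * ((j+1)-1) / 2) = _
      simp only [Nat.add_sub_cancel]
      rw [tri j, pow_add, pow_succ]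
      linear_combination (G q m j * (-a) ^ j * (-a) * q ^ (j * (j-1) / 2)) * hpow
    rw [qpn_succ, ih,
      Finset.sum_range_succ' (fun j => G q (m+1) j * (-a) ^ j * q ^ (j * (j-1) / 2)) (m+1),
      Finset.sum_congr rfl key, Finset.sum_add_distrib]
    have hA : ∑ j ∈ range (m+1), G q m (j+1) * (-a) ^ (j+1) * q ^ ((j+1) * ((j+1)-1) / 2)
        = (∑ j ∈ range (m+1), G q m j * (-a) ^ j * q ^ (j * (j-1) / 2)) - 1 := by
      have h1 := Finset.sum_range_succ'
        (fun j => G q m j * (-a) ^ j * q ^ (j * (j-1) / 2)) (m+1)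
      have h2 := Finset.sum_range_succ
        (fun j => G q m j * (-a) ^ j * q ^ (j * (j-1) / 2)) (m+1)
      rw [G_eq_zero q (Nat.lt_succ_self m)] at h2
      simp only [G_zero, pow_zero, Nat.zero_mul, Nat.zero_div, mul_one, one_mul,
        zero_mul, add_zero] at h1 h2
      rw [h2] at h1
      linear_combination -h1
    rw [hA, ← Finset.mul_sum]
    simp only [G_zero, pow_zero, Nat.zero_mul, Nat.zero_div, mul_one, one_mul]
    ring

lemma ext_sum (n : ℕ) (N : ℕ) (f : ℕ → ℂ) (hN : N ≤ n) (hf : ∀ j, N < j → f j = 0) :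
    ∑ j ∈ range (N+1), f j = ∑ j ∈ range (n+1), f j := by
  apply Finset.sum_subset (Finset.range_subset_range.mpr (by omega))
  intro j _ hj2
  exact hf j (by simp only [Finset.mem_range] at hj2; omega)

lemma shift_sum (n j : ℕ) (g : ℕ → ℂ) (h1 : ∀ k, k < j → g k = 0)
    (h2 : ∀ k, n < k → g k = 0) :
    ∑ k ∈ range (n+1), g k = ∑ m ∈ range (n+1), g (j+m) := by
  have e1 : ∑ k ∈ range (n+1), g k = ∑ k ∈ range (j+(n+1)), g k := by
    apply Finset.sum_subset (Finset.range_subset_range.mpr (by omega))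
    intro k _ hk2
    exact h2 k (by simp only [Finset.mem_range] at hk2; omega)
  rw [e1, Finset.sum_range_add, Finset.sum_eq_zero (fun k hk => h1 k (Finset.mem_range.mp hk)),
    zero_add]

section H
variable (q : ℂ) (H : ∀ m : ℕ, qpn q q m ≠ 0)
include H

lemma G_symm {n k : ℕ} (hk : k ≤ n) : G q n (n - k) = G q n k := by
  have h1 := G_mul q n (n-k) (Nat.sub_le n k)
  rw [show n - (n - k) = k from by omega] at h1
  have h2 := G_mul q n k hk
  apply mul_right_cancel₀ (mul_ne_zero (H (n-k)) (H k))
  linear_combination h1 - h2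

lemma Gmul2 {n j m : ℕ} (h : j + m ≤ n) :
    G q n (j+m) * G q (j+m) j = G q n j * G q (n-j) m := by
  have h1 := G_mul q (j+m) j (by omega)
  rw [show j + m - j = m from by omega] at h1
  have h2 := G_mul q n (j+m) h
  rw [show n - (j+m) = n - j - m from by omega] at h2
  have h3 := G_mul q n j (by omega)
  have h4 := G_mul q (n-j) m (by omega)
  rw [show n - j - m = n - j - m from rfl] at h4
  apply mul_right_cancel₀
    (mul_ne_zero (mul_ne_zero (H j) (H m)) (H (n-j-m)))
  linear_combination (G q n (j+m) * qpn q q (n-j-m)) * h1 + h2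
    - (G q n j * qpn q q j) * h4 - h3

lemma Gtrisym {n j k : ℕ} (h : j + k ≤ n) :
    G q n k * G q (n-k) j = G q n j * G q (n-j) k := by
  have h1 := G_mul q n k (by omega)
  rw [show n - k = n - k from rfl] at h1
  have h2 := G_mul q (n-k) j (by omega)
  rw [show n - k - j = n - j - k from by omega] at h2
  have h3 := G_mul q n j (by omega)
  have h4 := G_mul q (n-j) k (by omega)
  apply mul_right_cancel₀
    (mul_ne_zero (mul_ne_zero (H j) (H k)) (H (n-j-k)))
  linear_combination (G q n k * qpn q q k) * h2 + h1 - (G q n j * qpn q q j) * h4 - h3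


lemma star (n : ℕ) (a t : ℂ) :
    (∑ k ∈ range (n+1), G q n k * qpn q a k * t ^ k)
    = ∑ k ∈ range (n+1), G q n k * qpn q (t*a) (n-k) * t ^ k := by
  calc ∑ k ∈ range (n+1), G q n k * qpn q a k * t ^ k
      = ∑ k ∈ range (n+1), ∑ j ∈ range (n+1),
          G q n k * G q k j * (-a) ^ j * q ^ (j*(j-1)/2) * t ^ k := by
        refine Finset.sum_congr rfl (fun k hk => ?_)
        have hk' : k ≤ n := Nat.lt_succ_iff.mp (Finset.mem_range.mp hk)
        rw [qbinom q a k,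
          ext_sum n k _ hk' (fun j hj => by rw [G_eq_zero q hj]; ring),
          Finset.mul_sum, Finset.sum_mul]
        exact Finset.sum_congr rfl (fun j _ => by ring)
    _ = ∑ j ∈ range (n+1), ∑ k ∈ range (n+1),
          G q n k * G q k j * (-a) ^ j * q ^ (j*(j-1)/2) * t ^ k := Finset.sum_comm
    _ = ∑ j ∈ range (n+1), ∑ m ∈ range (n+1),
          G q n j * G q (n-j) m * (-a) ^ j * q ^ (j*(j-1)/2) * t ^ (j+m) := by
        refine Finset.sum_congr rfl (fun j hj => ?_)
        have hj' : j ≤ n := Nat.lt_succ_iff.mp (Finset.mem_range.mp hj)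
        rw [shift_sum n j _ (fun k hk => by rw [G_eq_zero q hk]; ring)
          (fun k hk => by rw [G_eq_zero q hk]; ring)]
        refine Finset.sum_congr rfl (fun m _ => ?_)
        rcases le_or_gt (j+m) n with hle | hlt
        · rw [show G q n (j+m) * G q (j+m) j * (-a) ^ j * q ^ (j*(j-1)/2) * t ^ (j+m)
            = (G q n (j+m) * G q (j+m) j) * ((-a) ^ j * q ^ (j*(j-1)/2) * t ^ (j+m)) from by
              ring, Gmul2 q H hle]
          ring
        · rw [G_eq_zero q hlt, G_eq_zero q (show n - j < m from by omega)]
          ring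
    _ = ∑ j ∈ range (n+1), ∑ k ∈ range (n+1),
          G q n k * G q (n-k) j * (-(t*a)) ^ j * q ^ (j*(j-1)/2) * t ^ k := by
        refine Finset.sum_congr rfl (fun j hj => Finset.sum_congr rfl (fun k hk => ?_))
        have hj' : j ≤ n := Nat.lt_succ_iff.mp (Finset.mem_range.mp hj)
        have hk' : k ≤ n := Nat.lt_succ_iff.mp (Finset.mem_range.mp hk)
        rcases le_or_gt (j+k) n with hle | hlt
        · rw [show G q n k * G q (n-k) j * (-(t*a)) ^ j * q ^ (j*(j-1)/2) * t ^ k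
            = (G q n k * G q (n-k) j) * ((-(t*a)) ^ j * q ^ (j*(j-1)/2) * t ^ k) from by ring,
            Gtrisym q H hle]
          rw [pow_add]
          ring
        · rw [G_eq_zero q (show n - j < k from by omega),
            G_eq_zero q (show n - k < j from by omega)]
          ring
    _ = ∑ k ∈ range (n+1), ∑ j ∈ range (n+1),
          G q n k * G q (n-k) j * (-(t*a)) ^ j * q ^ (j*(j-1)/2) * t ^ k := Finset.sum_comm
    _ = ∑ k ∈ range (n+1), G q n k * qpn q (t*a) (n-k) * t ^ k := by
        refine Finset.sum_congr rfl (fun k hk => ?_)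
        have hk' : k ≤ n := Nat.lt_succ_iff.mp (Finset.mem_range.mp hk)
        rw [qbinom q (t*a) (n-k),
          ext_sum n (n-k) _ (Nat.sub_le n k) (fun j hj => by rw [G_eq_zero q hj]; ring),
          Finset.mul_sum, Finset.sum_mul]
        exact Finset.sum_congr rfl (fun j _ => by ring)

end H

lemma Pk (q : ℂ) (hq : q ≠ 0) (n : ℕ) : ∀ k, k ≤ n →
    qpn q ((q^n)⁻¹) k * qpn q q (n-k) * (q^n)^k
      = (-1)^k * q^(k*(k-1)/2) * qpn q q n := by
  intro k
  induction k with
  | zero => intro _; simp [qpn_zero]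
  | succ k ih =>
    intro hk
    have h := ih (by omega)
    have f1 : qpn q ((q^n)⁻¹) (k+1)
        = qpn q ((q^n)⁻¹) k * (1 - (q^n)⁻¹ * q^k) := qpn_succ _ _ _
    have f2 : qpn q q (n-k) = qpn q q (n-(k+1)) * (1 - q * q^(n-(k+1))) := by
      conv_lhs => rw [show n - k = n - (k+1) + 1 from by omega, qpn_succ]
    rw [f2] at h
    have f3 : (q^n)⁻¹ * (q^n) = 1 := inv_mul_cancel₀ (pow_ne_zero n hq)
    have f4 : q * q^(n-(k+1)) = q^(n-k) := by
      rw [show n - k = n - (k+1) + 1 from by omega, pow_succ']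
    have f5 : q^k * q^(n-k) = q^n := by
      rw [← pow_add, show k + (n-k) = n from by omega]
    rw [f1, pow_succ]
    simp only [Nat.add_sub_cancel]
    rw [tri k, pow_add]
    linear_combination
      (-(qpn q ((q^n)⁻¹) k * qpn q q (n-(k+1)) * (q^n)^k * q^k)) * f3
      + (-(qpn q ((q^n)⁻¹) k * qpn q q (n-(k+1)) * (q^n)^k)) * f5
      + (-(q^k * qpn q ((q^n)⁻¹) k * qpn q q (n-(k+1)) * (q^n)^k)) * f4
      + (-(q^k)) * h

lemma phi20_eq (q : ℂ) (hq : q ≠ 0) (H : ∀ m : ℕ, qpn q q m ≠ 0) (n : ℕ) (B z : ℂ) :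
    phi20 q n B z = ∑ k ∈ range (n+1), G q n k * qpn q B k * (z / q^n)^k := by
  unfold phi20
  refine Finset.sum_congr rfl (fun k hk => ?_)
  have hk' : k ≤ n := Nat.lt_succ_iff.mp (Finset.mem_range.mp hk)
  have h1 := Pk q hq n k hk'
  have h2 := G_mul q n k hk'
  have hs : (-1:ℂ)^k * (-1)^k = 1 := by rw [← mul_pow]; norm_num
  have hQnk := H (n-k)
  have hQk := H k
  have hqb : q^(k*(k-1)/2) ≠ 0 := pow_ne_zero _ hq
  have hE : (q^n)^k ≠ 0 := pow_ne_zero _ (pow_ne_zero _ hq)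
  have main' : qpn q ((q^n)⁻¹) k * qpn q B k * (-1)^k * z^k * (q^n)^k
      = G q n k * qpn q q k * q^(k*(k-1)/2) * qpn q B k * z^k :=
    mul_right_cancel₀ hQnk (by
      linear_combination (qpn q B k * (-1)^k * z^k) * h1
        + (q^(k*(k-1)/2) * qpn q B k * z^k * qpn q q n) * hs
        - (q^(k*(k-1)/2) * qpn q B k * z^k) * h2)
  rw [div_pow]
  field_simp
  simp only [one_div]
  linear_combination main'


/-- `₂φ₀(q^(-n),cx;—;q,dq^n/c) = (d/c)^n ₂φ₀(q^(-n),dx;—;q,cq^n/d)`. -/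
theorem phi20_cd_symm (q : ℝ) (hq0 : 0 < q) (hq1 : q < 1) (n : ℕ) (c d x : ℂ)
    (hc : c ≠ 0) (hd : d ≠ 0) (hx : x ≠ 0) :
    phi20 (q : ℂ) n (c * x) (d * (q : ℂ) ^ n / c) =
      (d / c) ^ n * phi20 (q : ℂ) n (d * x) (c * (q : ℂ) ^ n / d) := by

  set Q : ℂ := (q : ℂ) with hQdef
  have hq : Q ≠ 0 := by
    simp only [hQdef, ne_eq, Complex.ofReal_eq_zero]; exact ne_of_gt hq0
  have H : ∀ m : ℕ, qpn Q Q m ≠ 0 := by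
    intro m
    unfold qpn
    rw [Finset.prod_ne_zero_iff]
    intro j _
    have e : (1 : ℂ) - Q * Q^j = ((1 - q * q^j : ℝ) : ℂ) := by push_cast; ring
    rw [e]
    have : q * q^j < 1 := by
      have h1 : q^j ≤ 1 := pow_le_one₀ (le_of_lt hq0) (le_of_lt hq1)
      nlinarith
    exact_mod_cast ne_of_gt (by linarith)
  have hQn : Q^n ≠ 0 := pow_ne_zero _ hq
  rw [phi20_eq Q hq H n (c*x) _, phi20_eq Q hq H n (d*x) _]
  have ez1 : (d * Q^n / c) / Q^n = d / c := by field_simp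
  have ez2 : (c * Q^n / d) / Q^n = c / d := by field_simp
  rw [ez1, ez2]
  have reflect : (∑ k ∈ range (n+1), G Q n k * qpn Q (d*x) k * (c/d)^k)
      = ∑ k ∈ range (n+1), G Q n k * qpn Q (d*x) (n-k) * (c/d)^(n-k) := by
    have h := Finset.sum_range_reflect
      (fun k => G Q n k * qpn Q (d*x) k * (c/d)^k) (n+1)
    simp only [Nat.add_sub_cancel] at h
    rw [← h]
    refine Finset.sum_congr rfl (fun k hk => ?_)
    have hk' : k ≤ n := Nat.lt_succ_iff.mp (Finset.mem_range.mp hk)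
    rw [G_symm Q H hk']
  rw [reflect, Finset.mul_sum]
  have hstar := star Q H n (c*x) (d/c)
  rw [show (d/c) * (c*x) = d*x from by field_simp] at hstar
  rw [hstar]
  refine Finset.sum_congr rfl (fun k hk => ?_)
  have hk' : k ≤ n := Nat.lt_succ_iff.mp (Finset.mem_range.mp hk)
  have hp1 : (d/c)^n = (d/c)^k * (d/c)^(n-k) := by
    rw [← pow_add, show k + (n-k) = n from by omega]
  have hp2 : (d/c)^(n-k) * (c/d)^(n-k) = 1 := by
    rw [← mul_pow, show (d/c) * (c/d) = 1 from by field_simp, one_pow]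
  calc G Q n k * qpn Q (d*x) (n-k) * (d/c)^k
      = G Q n k * qpn Q (d*x) (n-k) * (d/c)^k * ((d/c)^(n-k) * (c/d)^(n-k)) := by
        rw [hp2, mul_one]
    _ = (d/c)^n * (G Q n k * qpn Q (d*x) (n-k) * (c/d)^(n-k)) := by
        rw [hp1]; ring
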